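/- Let G' be obtained from a finite graph G by adding one new vertex i together with a single edge (i,j) to an existing vertex j. Then every nonzero eigenvalue of the non-backtracking matrix B(G') is an eigenvalue of B(G); equivalently, det(B(G') - γ I) = γ² · det(B(G) - γ I) for all γ. -/

import Mathlib

open Matrix

/-- The type of directed edges of a simple graph. -/
abbrev dirEdge {V : Type*} (G : SimpleGraph V) : Type _ := {e : V × V // G.Adj e.1 e.2}

noncomputable instance {V : Type*} [Finite V] (G : SimpleGraph V) : Fintype (dirEdge G) :=
  Fintype.ofFinite _

/-- The non-backtracking matrix `B_{(i→j),(k→l)} = δ_{jk} (1 - δ_{il})`. -/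
def nbMatrix {V : Type*} [DecidableEq V] (G : SimpleGraph V) :
    Matrix (dirEdge G) (dirEdge G) ℝ :=
  Matrix.of fun e f => if e.val.2 = f.val.1 ∧ e.val.1 ≠ f.val.2 then (1 : ℝ) else 0

/-- The graph obtained from `G` by adding one new (pendant) vertex, `none`, attached
by a single edge to the existing vertex `j`. -/
def addPendant {V : Type*} (G : SimpleGraph V) (j : V) : SimpleGraph (Option V) where
  Adj a b := (∃ x y, a = some x ∧ b = some y ∧ G.Adj x y) ∨
    (a = none ∧ b = some j) ∨ (a = some j ∧ b = none)
  symm := by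
    constructor
    rintro a b (⟨x, y, rfl, rfl, h⟩ | ⟨rfl, rfl⟩ | ⟨rfl, rfl⟩)
    · exact Or.inl ⟨y, x, rfl, rfl, h.symm⟩
    · exact Or.inr (Or.inr ⟨rfl, rfl⟩)
    · exact Or.inr (Or.inl ⟨rfl, rfl⟩)
  loopless := by
    constructor
    rintro a (⟨x, y, h1, h2, h3⟩ | ⟨h1, h2⟩ | ⟨h1, h2⟩)
    · rw [h1] at h2; cases h2; exact G.irrefl h3
    · rw [h1] at h2; exact absurd h2 (by simp)
    · rw [h1] at h2; exact absurd h2 (by simp)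

/-- An old directed edge viewed as a directed edge of the pendant extension. -/
def oldEdge {V : Type*} (G : SimpleGraph V) (j : V) (e : dirEdge G) :
    dirEdge (addPendant G j) :=
  ⟨(some e.val.1, some e.val.2), Or.inl ⟨e.val.1, e.val.2, rfl, rfl, e.prop⟩⟩

/-- The directed edges of the pendant extension are the old ones plus two new ones. -/
def pendEquiv {V : Type*} (G : SimpleGraph V) (j : V) :
    ((dirEdge G ⊕ Unit) ⊕ Unit) ≃ dirEdge (addPendant G j) where
  toFun x := match x with
    | .inl (.inl e) => oldEdge G j e
    | .inl (.inr _) => ⟨(none, some j), Or.inr (Or.inl ⟨rfl, rfl⟩)⟩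
    | .inr _ => ⟨(some j, none), Or.inr (Or.inr ⟨rfl, rfl⟩)⟩
  invFun e := match e with
    | ⟨(some x, some y), h⟩ => .inl (.inl ⟨(x, y), by
        rcases h with ⟨a, b, ha, hb, hab⟩ | ⟨h1, _⟩ | ⟨_, h2⟩
        · cases ha; cases hb; exact hab
        · exact absurd h1 (by simp)
        · exact absurd h2 (by simp)⟩)
    | ⟨(none, _), _⟩ => .inl (.inr ())
    | ⟨(some _, none), _⟩ => .inr ()
  left_inv := by
    rintro ((⟨⟨a, b⟩, h⟩ | ⟨⟩) | ⟨⟩) <;> rfl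
  right_inv := by
    rintro ⟨⟨a | x, b⟩, h⟩
    · rcases h with ⟨a', b', ha, hb, hab⟩ | ⟨_, h2⟩ | ⟨h1, _⟩
      · exact absurd ha (by simp)
      · exact Subtype.ext (Prod.ext rfl h2.symm)
      · exact absurd h1 (by simp)
    · match b, h with
      | some y, h => rfl
      | none, h =>
        rcases h with ⟨a', b', _, hb, _⟩ | ⟨h1, _⟩ | ⟨h1, _⟩
        · exact absurd hb (by simp)
        · exact absurd h1 (by simp)
        · cases h1; rfl

/-- adding a pendant vertex multiplies the characteristic polynomial of
the non-backtracking matrix by `γ²`; in particular every nonzero eigenvalue of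
`B(G')` is an eigenvalue of `B(G)`. -/
theorem stmt4 {V : Type*} [Fintype V] [DecidableEq V] (G : SimpleGraph V) (j : V) :
    (∀ γ : ℂ, (((nbMatrix (addPendant G j)).map Complex.ofReal) - γ • 1).det
        = γ ^ 2 * (((nbMatrix G).map Complex.ofReal) - γ • 1).det) ∧
    (∀ γ : ℂ, γ ≠ 0 →
      (((nbMatrix (addPendant G j)).map Complex.ofReal) - γ • 1).det = 0 →
      (((nbMatrix G).map Complex.ofReal) - γ • 1).det = 0) := by
  have main : ∀ γ : ℂ, (((nbMatrix (addPendant G j)).map Complex.ofReal) - γ • 1).det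
      = γ ^ 2 * (((nbMatrix G).map Complex.ofReal) - γ • 1).det := by
    intro γ
    set M := ((nbMatrix (addPendant G j)).map Complex.ofReal) - γ • 1 with hM
    have hsub : M.submatrix (pendEquiv G j) (pendEquiv G j) =
        fromBlocks
          (fromBlocks (((nbMatrix G).map Complex.ofReal) - γ • 1)
            0
            (Matrix.of fun _ (e : dirEdge G) => if j = e.val.1 then (1 : ℂ) else 0)
            (Matrix.of fun _ _ => -γ))
          (Matrix.of fun (x : dirEdge G ⊕ Unit) _ => Sum.rec
            (fun e => if e.val.2 = j then (1 : ℂ) else 0) (fun _ => 0) x)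
          0
          (Matrix.of fun _ _ => -γ) := by
      ext i k
      rcases i with (e | _) | _ <;> rcases k with (f | _) | _ <;>
        simp [hM, pendEquiv, oldEdge, nbMatrix, Matrix.fromBlocks,
          Matrix.sub_apply, Matrix.smul_apply, Matrix.one_apply, Matrix.map_apply,
          Subtype.ext_iff, Prod.ext_iff, apply_ite Complex.ofReal]
    have h1 : M.det = (M.submatrix (pendEquiv G j) (pendEquiv G j)).det :=
      (Matrix.det_submatrix_equiv_self _ _).symm
    rw [h1, hsub, Matrix.det_fromBlocks_zero₂₁, Matrix.det_fromBlocks_zero₁₂]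
    simp [Matrix.det_unique]
    ring
  refine ⟨main, fun γ hγ h => ?_⟩
  rw [main γ] at h
  rcases mul_eq_zero.mp h with h | h
  · exact absurd (pow_eq_zero_iff (by norm_num) |>.mp h) hγ
  · exact h
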